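/- Let ξ and η be positive irrational real numbers and m a positive natural number with ξ·η = m and η < m. If n ≥ 0 and the partial quotient b_{n+1} of ξ satisfies b_{n+1} ≥ 2m + 1, then the rational number m·q_n/p_n is a convergent of η; that is, there exists an index k ≥ 0 with m·q_n/p_n = P_k/Q_k. -/

import Mathlib

/-- Complete quotients: `cq ξ 0 = ξ`, `cq ξ (n+1) = 1/(cq ξ n - ⌊cq ξ n⌋)`. -/
noncomputable def cq (ξ : ℝ) : ℕ → ℝ
  | 0 => ξ
  | n + 1 => 1 / (cq ξ n - ⌊cq ξ n⌋)

/-- Partial quotients: `pquot ξ n = b_n = ⌊ξ_n⌋`. -/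
noncomputable def pquot (ξ : ℝ) (n : ℕ) : ℤ := ⌊cq ξ n⌋

/-- Convergent numerators, shifted by one: `cnum ξ 0 = p_{-1} = 1`,
`cnum ξ 1 = p_0 = b_0`, and `cnum ξ (n+1) = p_n = b_n p_{n-1} + p_{n-2}`. -/
noncomputable def cnum (ξ : ℝ) : ℕ → ℤ
  | 0 => 1
  | 1 => pquot ξ 0
  | n + 2 => pquot ξ (n + 1) * cnum ξ (n + 1) + cnum ξ n

/-- Convergent denominators, shifted by one: `cden ξ 0 = q_{-1} = 0`,
`cden ξ 1 = q_0 = 1`, and `cden ξ (n+1) = q_n = b_n q_{n-1} + q_{n-2}`. -/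
noncomputable def cden (ξ : ℝ) : ℕ → ℤ
  | 0 => 0
  | 1 => 1
  | n + 2 => pquot ξ (n + 1) * cden ξ (n + 1) + cden ξ n

lemma cq_irr {ξ : ℝ} (h : Irrational ξ) : ∀ n, Irrational (cq ξ n)
  | 0 => h
  | n + 1 => by
    have := (cq_irr h n).sub_intCast ⌊cq ξ n⌋
    simpa [cq, one_div] using this.inv

lemma cq_succ_gt_one {ξ : ℝ} (h : Irrational ξ) (n : ℕ) : 1 < cq ξ (n + 1) := by
  have hirr := cq_irr h n
  have hne : cq ξ n ≠ (⌊cq ξ n⌋ : ℝ) := hirr.ne_int _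
  have h0 : 0 < cq ξ n - ⌊cq ξ n⌋ :=
    lt_of_le_of_ne (sub_nonneg.mpr (Int.floor_le _)) (fun hc => hne (by linarith [hc.symm]))
  have h1 : cq ξ n - ⌊cq ξ n⌋ < 1 := by linarith [Int.lt_floor_add_one (cq ξ n)]
  show 1 < 1 / (cq ξ n - ⌊cq ξ n⌋)
  exact one_lt_one_div h0 h1

lemma pquot_succ_pos {ξ : ℝ} (h : Irrational ξ) (n : ℕ) : 1 ≤ pquot ξ (n + 1) :=
  Int.le_floor.mpr (by exact_mod_cast (cq_succ_gt_one h n).le)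

lemma pquot_pos {ξ : ℝ} (h : Irrational ξ) (h1 : 1 < ξ) : ∀ n, 1 ≤ pquot ξ n
  | 0 => Int.le_floor.mpr (by exact_mod_cast h1.le)
  | n + 1 => pquot_succ_pos h n

lemma cq_shift (ξ : ℝ) : ∀ j, cq ξ (j + 1) = cq (cq ξ 1) j
  | 0 => rfl
  | j + 1 => by rw [show cq ξ (j+2) = 1 / (cq ξ (j+1) - ⌊cq ξ (j+1)⌋) from rfl,
      cq_shift ξ j]; rfl

lemma pquot_shift (ξ : ℝ) (j : ℕ) : pquot ξ (j + 1) = pquot (cq ξ 1) j := by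
  unfold pquot; rw [cq_shift]

lemma cnum_pos {ξ : ℝ} (h : Irrational ξ) (h1 : 1 < ξ) : ∀ n, 1 ≤ cnum ξ n
  | 0 => le_refl 1
  | 1 => pquot_pos h h1 0
  | n + 2 => by
    have a := cnum_pos h h1 (n + 1); have b := cnum_pos h h1 n
    have c := pquot_succ_pos h n
    show 1 ≤ pquot ξ (n + 1) * cnum ξ (n + 1) + cnum ξ n
    nlinarith

lemma cden_nonneg {ξ : ℝ} (h : Irrational ξ) : ∀ n, 0 ≤ cden ξ n
  | 0 => le_refl 0
  | 1 => zero_le_one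
  | n + 2 => by
    have a := cden_nonneg h (n + 1); have b := cden_nonneg h n
    have c := pquot_succ_pos h n
    show 0 ≤ pquot ξ (n + 1) * cden ξ (n + 1) + cden ξ n
    nlinarith

lemma cden_pos {ξ : ℝ} (h : Irrational ξ) : ∀ n, 1 ≤ cden ξ (n + 1)
  | 0 => le_refl 1
  | n + 1 => by
    have a := cden_pos h n; have b := cden_nonneg h n
    have c := pquot_succ_pos h n
    show 1 ≤ pquot ξ (n + 1) * cden ξ (n + 1) + cden ξ n
    nlinarith

lemma shift (ξ : ℝ) : ∀ k, cnum ξ (k + 2) = pquot ξ 0 * cnum (cq ξ 1) (k + 1) + cden (cq ξ 1) (k + 1)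
    ∧ cden ξ (k + 2) = cnum (cq ξ 1) (k + 1)
  | 0 => by
    have h0 := pquot_shift ξ 0
    constructor <;> · simp only [cnum, cden, h0]; ring
  | 1 => by
    have h0 := pquot_shift ξ 0; have h1 := pquot_shift ξ 1
    constructor <;> · simp only [cnum, cden, h0, h1]; ring
  | (k + 2) => by
    obtain ⟨a1, a2⟩ := shift ξ k
    obtain ⟨b1, b2⟩ := shift ξ (k + 1)
    have hp := pquot_shift ξ (k + 2)
    constructor
    · show pquot ξ (k + 3) * cnum ξ (k + 3) + cnum ξ (k + 2) = _
      show _ = pquot ξ 0 * (pquot (cq ξ 1) (k + 2) * cnum (cq ξ 1) (k + 2) + cnum (cq ξ 1) (k + 1)) +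
          (pquot (cq ξ 1) (k + 2) * cden (cq ξ 1) (k + 2) + cden (cq ξ 1) (k + 1))
      rw [show (k + 3 : ℕ) = k + 1 + 2 from rfl] at *
      rw [b1, a1, show (k+1+2 : ℕ) = k+2+1 from rfl, hp]; ring
    · show pquot ξ (k + 3) * cden ξ (k + 3) + cden ξ (k + 2) = _
      rw [show (k + 3 : ℕ) = k + 1 + 2 from rfl] at *
      rw [b2, a2, show (k+1+2 : ℕ) = k+2+1 from rfl, hp]
      show _ = pquot (cq ξ 1) (k + 2) * cnum (cq ξ 1) (k + 2) + cnum (cq ξ 1) (k + 1)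
      rfl

lemma conv_eq : ∀ (k : ℕ) {η : ℝ}, Irrational η →
    ((Real.convergent η k : ℚ) : ℝ) = (cnum η (k + 1) : ℝ) / (cden η (k + 1) : ℝ)
  | 0, η, h => by
    simp [Real.convergent_zero, cnum, cden, pquot, cq]
  | (k + 1), η, h => by
    have hη1 : cq η 1 = (Int.fract η)⁻¹ := by
      show 1 / (η - ⌊η⌋) = _
      rw [Int.fract, one_div]
    have h' : Irrational (cq η 1) := cq_irr h 1
    have h1 : 1 < cq η 1 := cq_succ_gt_one h 0
    have IH := conv_eq k h' 
    have hC : (1 : ℤ) ≤ cnum (cq η 1) (k + 1) := cnum_pos h' h1 (k + 1)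
    have hD : (1 : ℤ) ≤ cden (cq η 1) (k + 1) := by
      cases k with
      | zero => exact le_refl 1
      | succ j => exact cden_pos h' (j + 1)
    have hCR : (0 : ℝ) < (cnum (cq η 1) (k + 1) : ℝ) := by exact_mod_cast hC
    have hDR : (0 : ℝ) < (cden (cq η 1) (k + 1) : ℝ) := by exact_mod_cast hD
    obtain ⟨s1, s2⟩ := shift η k
    have hp0 : (pquot η 0 : ℝ) = (⌊η⌋ : ℝ) := by norm_cast
    rw [Real.convergent_succ, show (k + 1 + 1 : ℕ) = k + 2 from rfl, s1, s2]
    push_cast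
    rw [← hη1, IH, hp0, inv_div]
    field_simp

lemma cq_mul {ξ : ℝ} (h : Irrational ξ) : ∀ k,
    ξ * (cq ξ (k + 1) * (cden ξ (k + 1) : ℝ) + (cden ξ k : ℝ)) =
      cq ξ (k + 1) * (cnum ξ (k + 1) : ℝ) + (cnum ξ k : ℝ)
  | 0 => by
    have hne : ξ - (⌊ξ⌋ : ℝ) ≠ 0 := sub_ne_zero.mpr (h.ne_int _)
    show ξ * (1 / (ξ - ⌊ξ⌋) * ((1 : ℤ) : ℝ) + ((0 : ℤ) : ℝ)) =
      1 / (ξ - ⌊ξ⌋) * ((pquot ξ 0 : ℤ) : ℝ) + ((1 : ℤ) : ℝ)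
    have : (pquot ξ 0 : ℝ) = (⌊ξ⌋ : ℝ) := by norm_cast
    rw [this]
    have hinv : (ξ - (⌊ξ⌋ : ℝ)) * (ξ - (⌊ξ⌋ : ℝ))⁻¹ = 1 := mul_inv_cancel₀ hne
    push_cast
    rw [one_div]
    linear_combination hinv
  | (k + 1) => by
    have IH := cq_mul h k
    have hne : cq ξ (k + 1) - (⌊cq ξ (k + 1)⌋ : ℝ) ≠ 0 :=
      sub_ne_zero.mpr ((cq_irr h (k + 1)).ne_int _)
    have hz2 : cq ξ (k + 2) ≠ 0 := by
      have := cq_succ_gt_one h (k + 1); linarith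
    have key : cq ξ (k + 1) * cq ξ (k + 2) = (pquot ξ (k + 1) : ℝ) * cq ξ (k + 2) + 1 := by
      show cq ξ (k + 1) * (1 / (cq ξ (k + 1) - ⌊cq ξ (k + 1)⌋)) = _
      show _ = (pquot ξ (k + 1) : ℝ) * (1 / (cq ξ (k + 1) - ⌊cq ξ (k + 1)⌋)) + 1
      have : ((pquot ξ (k + 1) : ℤ) : ℝ) = (⌊cq ξ (k + 1)⌋ : ℝ) := by norm_cast
      rw [this]
      have hinv : (cq ξ (k + 1) - (⌊cq ξ (k + 1)⌋ : ℝ)) * (cq ξ (k + 1) - (⌊cq ξ (k + 1)⌋ : ℝ))⁻¹ = 1 :=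
        mul_inv_cancel₀ hne
      rw [one_div]
      linear_combination hinv
    have e1 : (cden ξ (k + 2) : ℝ) = (pquot ξ (k + 1) : ℝ) * (cden ξ (k + 1) : ℝ) + (cden ξ k : ℝ) := by
      rw [show cden ξ (k + 2) = pquot ξ (k + 1) * cden ξ (k + 1) + cden ξ k from rfl]; push_cast; ring
    have e2 : (cnum ξ (k + 2) : ℝ) = (pquot ξ (k + 1) : ℝ) * (cnum ξ (k + 1) : ℝ) + (cnum ξ k : ℝ) := by
      rw [show cnum ξ (k + 2) = pquot ξ (k + 1) * cnum ξ (k + 1) + cnum ξ k from rfl]; push_cast; ring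
    rw [e1, e2]
    linear_combination cq ξ (k + 2) * IH + ((cnum ξ (k + 1) : ℝ) - ξ * (cden ξ (k + 1) : ℝ)) * key

lemma det (ξ : ℝ) : ∀ k, cnum ξ (k + 1) * cden ξ k - cnum ξ k * cden ξ (k + 1) = (-1) ^ (k + 1)
  | 0 => by simp [cnum, cden]
  | (k + 1) => by
    have IH := det ξ k
    show (pquot ξ (k + 1) * cnum ξ (k + 1) + cnum ξ k) * cden ξ (k + 1) -
      cnum ξ (k + 1) * (pquot ξ (k + 1) * cden ξ (k + 1) + cden ξ k) = (-1) ^ (k + 2)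
    linear_combination (-1 : ℤ) * IH

lemma eform {ξ : ℝ} (h : Irrational ξ) (k : ℕ) :
    (ξ * (cden ξ (k + 1) : ℝ) - (cnum ξ (k + 1) : ℝ)) *
      (cq ξ (k + 1) * (cden ξ (k + 1) : ℝ) + (cden ξ k : ℝ)) = (-1 : ℝ) ^ k := by
  have H := cq_mul h k
  have D : (cnum ξ (k + 1) : ℝ) * (cden ξ k : ℝ) - (cnum ξ k : ℝ) * (cden ξ (k + 1) : ℝ)
      = (-1 : ℝ) ^ (k + 1) := by exact_mod_cast congrArg (Int.cast : ℤ → ℝ) (det ξ k)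
  linear_combination (cden ξ (k + 1) : ℝ) * H - D

set_option maxHeartbeats 1000000 in
/-- Proposition 2.4: if `η < m` and the partial quotient `b_{n+1}` of `ξ`
satisfies `b_{n+1} ≥ 2m + 1`, then `m q_n / p_n` is a convergent of `η`. -/
theorem big_partial_quotient_gives_connection
    (ξ η : ℝ) (m : ℕ) (hξpos : 0 < ξ) (hηpos : 0 < η)
    (hξirr : Irrational ξ) (hηirr : Irrational η) (hm : 0 < m)
    (hmul : ξ * η = m) (hηm : η < m) (n : ℕ)
    (hb : (2 * m + 1 : ℤ) ≤ pquot ξ (n + 1)) :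
    ∃ k : ℕ, (m : ℝ) * (cden ξ (n + 1) : ℝ) / (cnum ξ (n + 1) : ℝ) =
      (cnum η (k + 1) : ℝ) / (cden η (k + 1) : ℝ) := by
  have hξ1 : 1 < ξ := by nlinarith
  set P : ℝ := (cnum ξ (n + 1) : ℝ) with hPdef
  set Q : ℝ := (cden ξ (n + 1) : ℝ) with hQdef
  set Q0 : ℝ := (cden ξ n : ℝ) with hQ0def
  set ζ : ℝ := cq ξ (n + 1) with hζdef
  have hPz : (1 : ℤ) ≤ cnum ξ (n + 1) := cnum_pos hξirr hξ1 _
  have hP : (1 : ℝ) ≤ P := by rw [hPdef]; exact_mod_cast hPz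
  have hQ : (1 : ℝ) ≤ Q := by rw [hQdef]; exact_mod_cast cden_pos hξirr n
  have hQ0 : (0 : ℝ) ≤ Q0 := by rw [hQ0def]; exact_mod_cast cden_nonneg hξirr n
  have hbζ : ((pquot ξ (n + 1) : ℤ) : ℝ) < ζ :=
    lt_of_le_of_ne (Int.floor_le _) (Ne.symm ((cq_irr hξirr (n + 1)).ne_int _))
  have hζ : (2 * (m : ℝ) + 1) < ζ := by
    refine lt_of_le_of_lt ?_ hbζ
    exact_mod_cast hb
  have hm1 : (1 : ℝ) ≤ (m : ℝ) := by exact_mod_cast hm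
  have hE := eform hξirr n
  rw [← hPdef, ← hQdef, ← hQ0def, ← hζdef] at hE
  have hden : 0 < ζ * Q + Q0 := by nlinarith
  have habs : |ξ * Q - P| * (ζ * Q + Q0) = 1 := by
    have h2 := congrArg abs hE
    rw [abs_mul, abs_of_pos hden] at h2
    rw [h2]
    rw [abs_pow, abs_neg, abs_one, one_pow]
  have hEabs : |ξ * Q - P| = 1 / (ζ * Q + Q0) := by
    rw [eq_div_iff hden.ne']; exact habs
  have hξ0 : ξ ≠ 0 := by positivity
  have hPpos : (0 : ℝ) < P := by linarith
  have hη : η = m / ξ := by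
    rw [eq_div_iff hξ0]; linarith [hmul, mul_comm ξ η]
  set q : ℚ := ((m : ℤ) * cden ξ (n + 1) : ℤ) / ((cnum ξ (n + 1) : ℤ) : ℚ) with hqdef
  have hqcast : (q : ℝ) = (m : ℝ) * Q / P := by
    rw [hqdef]; push_cast; ring
  have hqdi : q = Rat.divInt ((m : ℤ) * cden ξ (n + 1)) (cnum ξ (n + 1)) := by
    rw [hqdef, Rat.divInt_eq_div]
  have hqden_dvd : ((q.den : ℤ)) ∣ cnum ξ (n + 1) := by
    rw [hqdi]; exact Rat.den_dvd _ _
  have hqden_le : ((q.den : ℝ)) ≤ P := by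
    have h := Int.le_of_dvd (by linarith [hPz] : (0:ℤ) < cnum ξ (n+1)) hqden_dvd
    rw [hPdef]
    exact_mod_cast h
  have hqden_pos : (0 : ℝ) < (q.den : ℝ) := by
    exact_mod_cast q.pos
  -- the key bound
  have hA : (2 * (m : ℝ) + 1) * |ξ * Q - P| < 1 := by
    have h1 : 0 < |ξ * Q - P| := by
      rw [hEabs]; positivity
    nlinarith [habs]
  have hPE : P - ξ * Q ≤ |ξ * Q - P| := by
    rw [abs_sub_comm]; exact le_abs_self _
  have hstep1 : 2 * (m : ℝ) * P < (2 * (m : ℝ) + 1) * ξ * Q := by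
    nlinarith
  have hstep2 : (2 * (m : ℝ) + 1) * ξ * Q < ξ * (ζ * Q + Q0) := by
    nlinarith [mul_nonneg (le_of_lt hξpos) hQ0, mul_pos hξpos (lt_of_lt_of_le one_pos hQ)]
  have hmain : 2 * (m : ℝ) * P < ξ * (ζ * Q + Q0) := hstep1.trans hstep2
  have hclose : |η - (q : ℝ)| < 1 / (2 * (q.den : ℝ) ^ 2) := by
    rw [hqcast, hη]
    have e1 : (m : ℝ) / ξ - (m : ℝ) * Q / P = ((m : ℝ) / (ξ * P)) * (P - ξ * Q) := by
      field_simp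
    rw [e1, abs_mul, abs_of_pos (by positivity : (0:ℝ) < (m : ℝ) / (ξ * P)), abs_sub_comm,
      hEabs]
    have hlt : (m : ℝ) / (ξ * P) * (1 / (ζ * Q + Q0)) < 1 / (2 * P ^ 2) := by
      rw [div_mul_div_comm, mul_one, div_lt_div_iff₀ (by positivity) (by positivity)]
      nlinarith [mul_lt_mul_of_pos_right hmain hPpos]
    refine hlt.trans_le ?_
    apply one_div_le_one_div_of_le (by positivity)
    nlinarith [hqden_le, hqden_pos]
  obtain ⟨k, hk⟩ := Real.exists_rat_eq_convergent hclose
  refine ⟨k, ?_⟩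
  rw [← hqcast, hk]
  exact conv_eq k hηirr
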